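/- For positive integers a, b, c, e, the sum L(a,b,c,e) = Σ 1/(stuv), taken over all quadruples of nonzero integers (s,t,u,v) with as + bt + cu + ev = 0, equals 16π⁴ · ∫₀¹ ((ax))((bx))((cx))((ex)) dx. -/

import Mathlib

open Real

/-- The sawtooth (first Bernoulli) function `((x))`. -/
noncomputable def saw (x : ℝ) : ℝ := if Int.fract x = 0 then 0 else Int.fract x - 1/2

set_option maxHeartbeats 1000000

namespace Franel

open Complex MeasureTheory Set intervalIntegral AddCircle Function

theorem fact_zero_lt_one_real : Fact ((0:ℝ) < 1) := ⟨one_pos⟩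

attribute [local instance] fact_zero_lt_one_real

local notation "𝕌" => AddCircle (1:ℝ)

lemma saw_fract (x : ℝ) : saw (Int.fract x) = saw x := by
  simp [saw, Int.fract_fract]

lemma abs_saw_le (x : ℝ) : |saw x| ≤ 1 := by
  unfold saw
  split_ifs with h
  · simp
  · have h1 := Int.fract_nonneg x
    have h2 := Int.fract_lt_one x
    rw [abs_le]; constructor <;> linarith

lemma measurable_saw : Measurable saw := by
  refine Measurable.ite ?_ measurable_const (measurable_fract.sub measurable_const)
  exact measurable_fract (measurableSet_singleton 0)

noncomputable def sawA : 𝕌 → ℝ := AddCircle.liftIco 1 0 saw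

lemma coe_fract (x : ℝ) : ((Int.fract x : ℝ) : 𝕌) = (x : 𝕌) := by
  have h : ((x - Int.fract x : ℝ) : 𝕌) = 0 := by
    rw [AddCircle.coe_eq_zero_iff]
    exact ⟨⌊x⌋, by rw [zsmul_eq_mul, mul_one, Int.fract]; ring⟩
  rw [QuotientAddGroup.mk_sub, sub_eq_zero] at h
  exact h.symm

lemma sawA_coe (x : ℝ) : sawA ((x : ℝ) : 𝕌) = saw x := by
  rw [← coe_fract, sawA, AddCircle.liftIco_coe_apply, saw_fract]
  rw [zero_add]
  exact ⟨Int.fract_nonneg x, Int.fract_lt_one x⟩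

lemma measurable_sawA : Measurable sawA := by
  have h : Measurable (AddCircle.equivIco (1:ℝ) 0) := (AddCircle.measurableEquivIco (1:ℝ) 0).measurable
  exact (measurable_saw.comp measurable_subtype_coe).comp h

lemma abs_sawA_le (x : 𝕌) : |sawA x| ≤ 1 := by
  induction x using QuotientAddGroup.induction_on with
  | H y => rw [sawA_coe]; exact abs_saw_le y

/-- `phi n` is the function `x ↦ saw (n x)` on the circle. -/
noncomputable def phi (n : ℕ) : 𝕌 → ℂ := fun x => (sawA ((n : ℤ) • x) : ℝ)

lemma phi_coe (n : ℕ) (x : ℝ) : phi n ((x : ℝ) : 𝕌) = ((saw ((n : ℝ) * x) : ℝ) : ℂ) := by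
  have h : ((n : ℤ) • (x : 𝕌)) = (((n : ℝ) * x : ℝ) : 𝕌) := by
    rw [← QuotientAddGroup.mk_zsmul]
    norm_num
  rw [phi, h, sawA_coe]

lemma measurable_phi (n : ℕ) : Measurable (phi n) :=
  Complex.measurable_ofReal.comp (measurable_sawA.comp (continuous_zsmul (n:ℤ)).measurable)

lemma norm_phi_le (n : ℕ) (x : 𝕌) : ‖phi n x‖ ≤ 1 := by
  rw [phi, Complex.norm_real]
  exact abs_sawA_le _


lemma phi_real (n : ℕ) (x : 𝕌) : (starRingEnd ℂ) (phi n x) = phi n x :=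
  Complex.conj_ofReal _

/-- The Fourier coefficients of `phi n`. -/
noncomputable def Acoef (n : ℕ) (j : ℤ) : ℂ :=
  if (n : ℤ) ∣ j then -(n : ℂ) / (2 * π * I * j) else 0

lemma bernoulliFun_one (x : ℝ) : bernoulliFun 1 x = x - 1/2 := by
  simp [bernoulliFun, Polynomial.bernoulli, Finset.sum_range_succ]
  ring

lemma saw_add_nat (x : ℝ) (k : ℕ) : saw (x + k) = saw x := by
  simp [saw, Int.fract_add_natCast]

lemma two_pi_I_ne : (2 * (π:ℂ) * I) ≠ 0 := by
  simp [Real.pi_ne_zero, I_ne_zero]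

lemma intervalIntegrable_of_bound (g : ℝ → ℂ) (hg : Measurable g) (C : ℝ)
    (h : ∀ y, ‖g y‖ ≤ C) (a b : ℝ) : IntervalIntegrable g volume a b := by
  rw [intervalIntegrable_iff]
  haveI : IsFiniteMeasure (volume.restrict (Set.uIoc a b)) :=
    ⟨by rw [Measure.restrict_apply_univ]; exact measure_Ioc_lt_top⟩
  exact ⟨hg.aestronglyMeasurable.restrict, HasFiniteIntegral.of_bounded (ae_of_all _ h)⟩

lemma fourierCoeff_phi (n : ℕ) (hn : 0 < n) (j : ℤ) :
    fourierCoeff (phi n) j = Acoef n j := by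
  have hn0 : (n : ℝ) ≠ 0 := Nat.cast_ne_zero.mpr hn.ne'
  have hnc : (n : ℂ) ≠ 0 := Nat.cast_ne_zero.mpr hn.ne'
  set g : ℝ → ℂ := fun y => (saw y : ℂ) * Complex.exp (2 * π * I * (-j) * y / n) with hgdef
  set ω : ℂ := Complex.exp (2 * π * I * (-j) / n) with hωdef
  set J : ℂ := ∫ y in (0:ℝ)..1, g y with hJdef
  have hgm : Measurable g := by
    apply (Complex.measurable_ofReal.comp measurable_saw).mul
    apply Measurable.cexp
    exact (measurable_const.mul Complex.measurable_ofReal).div measurable_const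
  have hgb : ∀ y, ‖g y‖ ≤ 1 := by
    intro y
    rw [hgdef]
    simp only [norm_mul]
    have h1 : ‖(saw y : ℂ)‖ ≤ 1 := by rw [Complex.norm_real]; exact abs_saw_le y
    have h2 : ‖Complex.exp (2 * π * I * (-j) * y / n)‖ = 1 := by
      have : (2 * (π:ℂ) * I * (-j) * y / n) = ((2 * π * (-j) * y / n : ℝ) : ℂ) * I := by
        push_cast; ring
      rw [this, Complex.norm_exp_ofReal_mul_I]
    rw [h2, mul_one]
    exact h1
  have hint : ∀ a b : ℝ, IntervalIntegrable g volume a b :=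
    intervalIntegrable_of_bound g hgm 1 hgb
  -- step 1 : reduce to interval integral of g (n x)
  have h1 : fourierCoeff (phi n) j = ∫ x in (0:ℝ)..1, g ((n : ℝ) * x) := by
    rw [fourierCoeff_eq_intervalIntegral (phi n) j 0]
    norm_num
    apply intervalIntegral.integral_congr
    intro x _
    dsimp only
    have hconj : (starRingEnd ℂ) (cexp (2 * ↑π * I * ↑j * ↑x)) = cexp (2 * ↑π * I * (-↑j) * ↑x) := by
      rw [← Complex.exp_conj]
      congr 1
      simp only [map_mul, map_ofNat, Complex.conj_I, Complex.conj_ofReal, map_intCast]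
      ring
    rw [hconj, phi_coe, hgdef]
    dsimp only
    rw [mul_comm]
    congr 1
    congr 1
    rw [eq_div_iff hnc]
    push_cast
    ring
  -- step 2 : substitution y = n x
  have h2 : ∫ x in (0:ℝ)..1, g ((n : ℝ) * x) = (n:ℝ)⁻¹ • ∫ y in (0:ℝ)..(n:ℝ), g y := by
    rw [intervalIntegral.integral_comp_mul_left g hn0]
    norm_num
  -- step 3 : split into n unit intervals
  have h3 : ∫ y in (0:ℝ)..(n:ℝ), g y = (∑ k ∈ Finset.range n, ω ^ k) * J := by
    have hadj := intervalIntegral.sum_integral_adjacent_intervals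
      (a := fun k : ℕ => (k:ℝ)) (μ := volume) (f := g) (n := n) (fun k _ => hint _ _)
    simp only [Nat.cast_zero] at hadj
    rw [← hadj, Finset.sum_mul]
    refine Finset.sum_congr rfl fun k _ => ?_
    have hshift : ∫ y in ((k:ℕ):ℝ)..((k:ℕ):ℝ)+1, g y = ∫ y in (0:ℝ)..1, g (y + (k:ℝ)) := by
      rw [intervalIntegral.integral_comp_add_right g (k:ℝ), zero_add, add_comm]
    have hcast : (((k+1:ℕ)):ℝ) = ((k:ℕ):ℝ) + 1 := by push_cast; ring
    rw [hcast, hshift]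
    have hcongr : ∀ y : ℝ, g (y + (k:ℝ)) = g y * ω ^ k := by
      intro y
      have hsplit : cexp (2 * ↑π * I * -↑j * ↑(y + (k:ℝ)) / ↑n)
          = cexp (2 * ↑π * I * -↑j * ↑y / ↑n) * ω ^ k := by
        rw [hωdef, ← Complex.exp_nat_mul, ← Complex.exp_add]
        congr 1
        push_cast
        ring
      rw [hgdef]
      dsimp only
      rw [saw_add_nat y k, hsplit]
      ring
    simp only [hcongr]
    rw [intervalIntegral.integral_mul_const, mul_comm]
  by_cases hd : (n : ℤ) ∣ j
  · obtain ⟨s, rfl⟩ := hd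
    -- ω = 1
    have hω1 : ω = 1 := by
      rw [hωdef]
      have : (2 * (π:ℂ) * I * (-(((n:ℤ) * s : ℤ) : ℂ)) / n) = ((-s : ℤ) : ℂ) * (2 * π * I) := by
        rw [div_eq_iff hnc]
        push_cast
        ring
      rw [this, Complex.exp_int_mul_two_pi_mul_I]
    -- J = bernoulli coefficient
    have hJ : J = -1 / (2 * π * I * s) := by
      have hJb : J = bernoulliFourierCoeff 1 s := by
        rw [hJdef, bernoulliFourierCoeff, fourierCoeffOn_eq_integral]
        norm_num
        apply intervalIntegral.integral_congr_ae
        have hne : ∀ᵐ (y:ℝ), y ≠ 1 := by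
          rw [MeasureTheory.ae_iff]
          have : {y : ℝ | ¬ y ≠ 1} = {1} := by ext y; simp
          rw [this]
          exact measure_singleton 1
        filter_upwards [hne] with y hy hymem
        rw [Set.uIoc_of_le (by norm_num : (0:ℝ) ≤ 1)] at hymem
        obtain ⟨hy0, hy1⟩ := hymem
        have hy1' : y < 1 := lt_of_le_of_ne hy1 hy
        have hfr : Int.fract y = y := Int.fract_eq_self.mpr ⟨le_of_lt hy0, hy1'⟩
        have hsaw : saw y = y - 1/2 := by rw [saw, hfr, if_neg (ne_of_gt hy0)]
        rw [hgdef]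
        dsimp only
        have hconj2 : (starRingEnd ℂ) (cexp (2 * ↑π * I * ↑s * ↑y)) = cexp (2 * ↑π * I * (-↑s) * ↑y) := by
          rw [← Complex.exp_conj]
          congr 1
          simp only [map_mul, map_ofNat, Complex.conj_I, Complex.conj_ofReal, map_intCast]
          ring
        rw [hconj2, hsaw, mul_comm]; push_cast
        congr 1
        congr 1
        rw [div_eq_iff hnc]
        push_cast
        ring
      rw [hJb, bernoulliFourierCoeff_eq one_ne_zero s]
      norm_num
    rw [h1, h2, h3, hω1]
    simp only [one_pow, Finset.sum_const, Finset.card_range, nsmul_eq_mul, mul_one]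
    rw [hJ, Acoef, if_pos (Dvd.intro s rfl)]
    rcases eq_or_ne s 0 with rfl | hs
    · norm_num
    · have hsc : (s : ℂ) ≠ 0 := Int.cast_ne_zero.mpr hs
      have hden : (2 * (π:ℂ) * I * s) ≠ 0 := mul_ne_zero two_pi_I_ne hsc
      have hden2 : (2 * (π:ℂ) * I * ((n:ℂ) * s)) ≠ 0 := mul_ne_zero two_pi_I_ne (mul_ne_zero hnc hsc)
      rw [Complex.real_smul]
      push_cast
      rw [inv_mul_cancel_left₀ hnc, div_eq_div_iff hden hden2]
      ring
  · -- non-divisible case : geometric sum vanishes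
    have hω1 : ω ≠ 1 := by
      intro h
      rw [hωdef, Complex.exp_eq_one_iff] at h
      obtain ⟨m, hm⟩ := h
      have key : (-(j:ℂ)) = m * n := by
        rw [div_eq_iff hnc] at hm
        have h2 : (2 * (π:ℂ) * I) * (-(j:ℂ)) = (2 * (π:ℂ) * I) * ((m:ℂ) * n) := by
          linear_combination hm
        exact mul_left_cancel₀ two_pi_I_ne h2
      have key2 : -j = m * n := by exact_mod_cast key
      exact hd ⟨-m, by linarith⟩
    have hωn : ω ^ n = 1 := by
      rw [hωdef, ← Complex.exp_nat_mul]
      have : (n:ℂ) * (2 * π * I * (-j) / n) = ((-j : ℤ) : ℂ) * (2 * π * I) := by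
        rw [mul_comm ((n:ℂ)) _, div_mul_cancel₀ _ hnc]
        push_cast
        ring
      rw [this, Complex.exp_int_mul_two_pi_mul_I]
    rw [h1, h2, h3, geom_sum_eq hω1, hωn]
    simp [Acoef, hd]


lemma norm_fourier (k : ℤ) (x : 𝕌) : ‖fourier k x‖ = 1 := by
  rw [fourier_apply]; exact Circle.norm_coe _

lemma memLp_phi (n : ℕ) : MemLp (phi n) 2 haarAddCircle :=
  MemLp.of_bound (measurable_phi n).aestronglyMeasurable 1 (Filter.Eventually.of_forall (norm_phi_le n))

lemma memLp_phi_mul (n m : ℕ) : MemLp (fun x => phi n x * phi m x) 2 haarAddCircle := by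
  apply MemLp.of_bound ((measurable_phi n).mul (measurable_phi m)).aestronglyMeasurable 1
  apply Filter.Eventually.of_forall
  intro x
  rw [Pi.mul_apply, norm_mul]
  exact mul_le_one₀ (norm_phi_le n x) (norm_nonneg _) (norm_phi_le m x)

lemma memLp_fourier_mul (k : ℤ) (n : ℕ) :
    MemLp (fun x => fourier k x * phi n x) 2 haarAddCircle := by
  apply MemLp.of_bound (((map_continuous (fourier k)).measurable).mul (measurable_phi n)).aestronglyMeasurable 1
  apply Filter.Eventually.of_forall
  intro x
  rw [Pi.mul_apply, norm_mul, norm_fourier, one_mul]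
  exact norm_phi_le n x

lemma fourierCoeff_congr_ae {f g : 𝕌 → ℂ} (h : f =ᵐ[haarAddCircle] g) (n : ℤ) :
    fourierCoeff f n = fourierCoeff g n := by
  unfold fourierCoeff
  apply MeasureTheory.integral_congr_ae
  filter_upwards [h] with x hx
  rw [hx]

/-- Parseval's identity for two bounded measurable functions on the circle. -/
lemma parseval {f g : 𝕌 → ℂ} (hf : MemLp f 2 haarAddCircle) (hg : MemLp g 2 haarAddCircle) :
    HasSum (fun k : ℤ => (starRingEnd ℂ) (fourierCoeff f k) * fourierCoeff g k)
      (∫ x : 𝕌, (starRingEnd ℂ) (f x) * g x ∂haarAddCircle) := by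
  have H := (@fourierBasis (1:ℝ) _).hasSum_inner_mul_inner (hf.toLp f) (hg.toLp g)
  have hcf : ∀ k : ℤ, (inner ℂ ((@fourierBasis (1:ℝ) _) k) (hf.toLp f) : ℂ) = fourierCoeff f k := by
    intro k
    rw [← fourierBasis.repr_apply_apply, fourierBasis_repr]
    exact fourierCoeff_congr_ae (hf.coeFn_toLp) k
  have hcg : ∀ k : ℤ, (inner ℂ ((@fourierBasis (1:ℝ) _) k) (hg.toLp g) : ℂ) = fourierCoeff g k := by
    intro k
    rw [← fourierBasis.repr_apply_apply, fourierBasis_repr]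
    exact fourierCoeff_congr_ae (hg.coeFn_toLp) k
  have hinner : (inner ℂ (hf.toLp f) (hg.toLp g) : ℂ)
      = ∫ x : 𝕌, (starRingEnd ℂ) (f x) * g x ∂haarAddCircle := by
    rw [MeasureTheory.L2.inner_def]
    apply MeasureTheory.integral_congr_ae
    filter_upwards [hf.coeFn_toLp, hg.coeFn_toLp] with x hx hy
    rw [hx, hy, RCLike.inner_apply, mul_comm]
  rw [hinner] at H
  convert H using 2 with k
  swap
  rw [← hcf k, ← hcg k, ← inner_conj_symm]
  rw [Complex.conj_conj]
  rfl

lemma conj_Acoef (n : ℕ) (j : ℤ) : (starRingEnd ℂ) (Acoef n j) = Acoef n (-j) := by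
  by_cases h : (n:ℤ) ∣ j
  · rw [Acoef, Acoef, if_pos h, if_pos (dvd_neg.mpr h), map_div₀, map_neg]
    simp only [map_mul, map_ofNat, Complex.conj_I, Complex.conj_ofReal, map_intCast, map_natCast]
    push_cast
    ring_nf
  · rw [Acoef, Acoef, if_neg h, if_neg (fun hc => h (dvd_neg.mp hc)), map_zero]

lemma fourierCoeff_fourier_mul (k i : ℤ) (n : ℕ) :
    fourierCoeff (fun x => fourier k x * phi n x) i = fourierCoeff (phi n) (i - k) := by
  unfold fourierCoeff
  apply MeasureTheory.integral_congr_ae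
  apply Filter.Eventually.of_forall
  intro x
  dsimp only
  rw [smul_eq_mul, smul_eq_mul, ← mul_assoc, ← fourier_add]
  congr 2
  ring

/-- Fourier coefficients of a product of two `phi`'s, as a convolution. -/
lemma hasSum_coeff_mul (n m : ℕ) (hn : 0 < n) (hm : 0 < m) (k : ℤ) :
    HasSum (fun i : ℤ => Acoef n (k - i) * Acoef m i)
      (fourierCoeff (fun x => phi n x * phi m x) k) := by
  have H := parseval (memLp_fourier_mul k n) (memLp_phi m)
  have hterm : ∀ i : ℤ, (starRingEnd ℂ) (fourierCoeff (fun x => fourier k x * phi n x) i)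
      * fourierCoeff (phi m) i = Acoef n (k - i) * Acoef m i := by
    intro i
    rw [fourierCoeff_fourier_mul, fourierCoeff_phi n hn, fourierCoeff_phi m hm,
      conj_Acoef, neg_sub]
  have hint : (∫ x : 𝕌, (starRingEnd ℂ) (fourier k x * phi n x) * phi m x ∂haarAddCircle)
      = fourierCoeff (fun x => phi n x * phi m x) k := by
    unfold fourierCoeff
    apply MeasureTheory.integral_congr_ae
    apply Filter.Eventually.of_forall
    intro x
    dsimp only
    rw [map_mul, phi_real, smul_eq_mul, ← fourier_neg, mul_assoc]
  rw [hint] at H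
  exact H.congr_fun fun i => (hterm i).symm


noncomputable def w (s : ℤ) : ℂ := -1 / (2 * π * I * s)

lemma Acoef_mul_self (n : ℕ) (hn : 0 < n) (s : ℤ) : Acoef n ((n:ℤ) * s) = w s := by
  have hnc : (n : ℂ) ≠ 0 := Nat.cast_ne_zero.mpr hn.ne'
  rw [Acoef, if_pos (Dvd.intro s rfl), w]
  rcases eq_or_ne s 0 with rfl | hs
  · norm_num
  · have hsc : (s:ℂ) ≠ 0 := Int.cast_ne_zero.mpr hs
    rw [div_eq_div_iff (by push_cast; exact mul_ne_zero two_pi_I_ne (mul_ne_zero hnc hsc))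
      (mul_ne_zero two_pi_I_ne hsc)]
    push_cast
    ring

lemma Acoef_ne_zero {n : ℕ} {j : ℤ} (h : Acoef n j ≠ 0) : (n:ℤ) ∣ j ∧ j ≠ 0 := by
  by_cases hd : (n:ℤ) ∣ j
  · refine ⟨hd, ?_⟩
    rintro rfl
    rw [Acoef, if_pos hd] at h
    norm_num at h
  · rw [Acoef, if_neg hd] at h
    norm_num at h

lemma conj_w (s : ℤ) : (starRingEnd ℂ) (w s) = w (-s) := by
  rw [w, w, map_div₀, map_neg, map_one]
  simp only [map_mul, map_ofNat, Complex.conj_I, Complex.conj_ofReal, map_intCast]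
  push_cast
  ring_nf

lemma norm_w_le (s : ℤ) : ‖w s‖ ≤ |(s:ℝ)|⁻¹ := by
  rcases eq_or_ne s 0 with rfl | hs
  · simp [w]
  · have hs' : (0:ℝ) < |(s:ℝ)| := by
      rw [abs_pos]
      exact_mod_cast hs
    have h2 : ‖(2 * (π:ℂ) * I * (s:ℂ))‖ = 2 * π * |(s:ℝ)| := by
      rw [norm_mul, norm_mul, norm_mul]
      have e1 : ‖(2:ℂ)‖ = 2 := by norm_num
      have e2 : ‖((π:ℝ):ℂ)‖ = π := by
        rw [Complex.norm_real, Real.norm_eq_abs, abs_of_pos Real.pi_pos]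
      have e3 : ‖(I:ℂ)‖ = 1 := Complex.norm_I
      have e4 : ‖((s:ℤ):ℂ)‖ = |(s:ℝ)| := by
        rw [show ((s:ℤ):ℂ) = (((s:ℤ):ℝ):ℂ) by push_cast; ring, Complex.norm_real, Real.norm_eq_abs]
      rw [e1, e2, e3, e4, mul_one]
    rw [w, norm_div, norm_neg, norm_one, h2, one_div]
    exact inv_anti₀ hs' (by nlinarith [Real.pi_gt_three])

/-- The pair index set: pairs of nonzero integers with `n s + m t = k`. -/
def Pset (n m : ℕ) (k : ℤ) := {q : ℤ × ℤ // q.1 ≠ 0 ∧ q.2 ≠ 0 ∧ (n:ℤ) * q.1 + m * q.2 = k}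

lemma hasSum_fiber (n m : ℕ) (hn : 0 < n) (hm : 0 < m) (k : ℤ) :
    HasSum (fun q : Pset n m k => w q.1.1 * w q.1.2)
      (fourierCoeff (fun x => phi n x * phi m x) k) := by
  have hn0 : (n:ℤ) ≠ 0 := by exact_mod_cast hn.ne'
  have hm0 : (m:ℤ) ≠ 0 := by exact_mod_cast hm.ne'
  have H := hasSum_coeff_mul n m hn hm k
  have hinj : Function.Injective (fun q : Pset n m k => (m:ℤ) * q.1.2) := by
    rintro ⟨⟨s,t⟩,hs,ht,hst⟩ ⟨⟨s',t'⟩,hs',ht',hst'⟩ h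
    simp only at h
    have ht2 : t = t' := mul_left_cancel₀ hm0 h
    subst ht2
    have hs2 : s = s' := by
      have h1 : (n:ℤ) * s = n * s' := by linarith
      exact mul_left_cancel₀ hn0 h1
    subst hs2
    rfl
  have hsupp : ∀ i ∉ Set.range (fun q : Pset n m k => (m:ℤ) * q.1.2),
      Acoef n (k - i) * Acoef m i = 0 := by
    intro i hi
    by_contra h0
    have h1 : Acoef n (k-i) ≠ 0 := fun h => h0 (by rw [h, zero_mul])
    have h2 : Acoef m i ≠ 0 := fun h => h0 (by rw [h, mul_zero])
    obtain ⟨⟨s, hks⟩, hkne⟩ := Acoef_ne_zero h1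
    obtain ⟨⟨t, hit⟩, hine⟩ := Acoef_ne_zero h2
    apply hi
    refine ⟨⟨(s, t), ?_, ?_, ?_⟩, ?_⟩
    · rintro rfl
      rw [mul_zero] at hks
      exact hkne hks
    · rintro rfl
      rw [mul_zero] at hit
      exact hine hit
    · rw [← hks, ← hit]; ring
    · exact hit.symm
  have H2 := (hinj.hasSum_iff hsupp).mpr H
  apply H2.congr_fun
  rintro ⟨⟨s,t⟩,hs,ht,hst⟩
  simp only [Function.comp]
  have h1 : k - (m:ℤ) * t = n * s := by linarith
  rw [h1, Acoef_mul_self n hn, Acoef_mul_self m hm]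

/-- Negation equivalence between fibers. -/
def negEquiv (n m : ℕ) (k : ℤ) : Pset n m k ≃ Pset n m (-k) where
  toFun q := ⟨(-q.1.1, -q.1.2), neg_ne_zero.mpr q.2.1, neg_ne_zero.mpr q.2.2.1, by
    have h := q.2.2.2; dsimp only; linarith⟩
  invFun q := ⟨(-q.1.1, -q.1.2), neg_ne_zero.mpr q.2.1, neg_ne_zero.mpr q.2.2.1, by
    have h := q.2.2.2; dsimp only; linarith⟩
  left_inv q := Subtype.ext (by simp)
  right_inv q := Subtype.ext (by simp)

/-- Transport to `-k` with conjugation. -/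
lemma hasSum_fiber_conj (n m : ℕ) (hn : 0 < n) (hm : 0 < m) (k : ℤ) :
    HasSum (fun q : Pset n m (-k) => w q.1.1 * w q.1.2)
      ((starRingEnd ℂ) (fourierCoeff (fun x => phi n x * phi m x) k)) := by
  have H := ((hasSum_fiber n m hn hm k).map (starRingEnd ℂ) continuous_star)
  have H2 : HasSum (fun q : Pset n m k => w (-q.1.1) * w (-q.1.2))
      ((starRingEnd ℂ) (fourierCoeff (fun x => phi n x * phi m x) k)) := by
    apply H.congr_fun
    intro q
    simp only [Function.comp]
    rw [map_mul, conj_w, conj_w]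
  have H3 := (((negEquiv n m k).symm).hasSum_iff).mpr H2
  apply H3.congr_fun
  rintro ⟨⟨s,t⟩, hq⟩
  show w s * w t = w (-(-s)) * w (-(-t))
  simp


lemma w_def (s : ℤ) : w s = -1 / (2 * (π:ℂ) * I * s) := rfl

lemma key_one {x y z v : ℝ} (hy : 1 ≤ y) (hz : 1 ≤ z) (hv : 1 ≤ v)
    (h1 : y ≤ x) (h2 : z ≤ x) (h3 : v ≤ x) :
    (x*y*z*v)⁻¹ ≤ (y*z*v) ^ (-(4/3) : ℝ) := by
  have hx : (1:ℝ) ≤ x := le_trans hy h1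
  have hy0 : (0:ℝ) < y := by linarith
  have hz0 : (0:ℝ) < z := by linarith
  have hv0 : (0:ℝ) < v := by linarith
  have hx0 : (0:ℝ) < x := by linarith
  have hpos : (0:ℝ) < y*z*v := by positivity
  have hcube : y*z*v ≤ x^3 := by
    calc y*z*v ≤ (x*x)*v :=
          mul_le_mul_of_nonneg_right (mul_le_mul h1 h2 hz0.le (by linarith)) hv0.le
      _ ≤ (x*x)*x := mul_le_mul_of_nonneg_left h3 (by positivity)
      _ = x^3 := by ring
  have hroot : (y*z*v) ^ ((1:ℝ)/3) ≤ x := by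
    calc (y*z*v) ^ ((1:ℝ)/3) ≤ (x^3) ^ ((1:ℝ)/3) :=
          Real.rpow_le_rpow (le_of_lt hpos) hcube (by norm_num)
      _ = x := by
          rw [← Real.rpow_natCast x 3, ← Real.rpow_mul (by linarith)]
          norm_num
  have hfour : (y*z*v) ^ ((4:ℝ)/3) ≤ x*y*z*v := by
    have heq : (y*z*v) ^ ((4:ℝ)/3) = (y*z*v) ^ ((1:ℝ)/3 + 1) := by norm_num
    rw [heq, Real.rpow_add hpos, Real.rpow_one]
    calc (y*z*v) ^ ((1:ℝ)/3) * (y*z*v) ≤ x * (y*z*v) :=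
          mul_le_mul_of_nonneg_right hroot hpos.le
      _ = x*y*z*v := by ring
  rw [show (-(4/3) : ℝ) = -((4:ℝ)/3) by norm_num, Real.rpow_neg hpos.le]
  exact inv_anti₀ (Real.rpow_pos_of_pos hpos _) hfour

lemma key4 {x y z v : ℝ} (hx : 1 ≤ x) (hy : 1 ≤ y) (hz : 1 ≤ z) (hv : 1 ≤ v) :
    (x*y*z*v)⁻¹ ≤ (y*z*v) ^ (-(4/3):ℝ) + (x*z*v) ^ (-(4/3):ℝ)
      + (x*y*v) ^ (-(4/3):ℝ) + (x*y*z) ^ (-(4/3):ℝ) := by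
  have t1 : (0:ℝ) ≤ (y*z*v) ^ (-(4/3):ℝ) := by positivity
  have t2 : (0:ℝ) ≤ (x*z*v) ^ (-(4/3):ℝ) := by positivity
  have t3 : (0:ℝ) ≤ (x*y*v) ^ (-(4/3):ℝ) := by positivity
  have t4 : (0:ℝ) ≤ (x*y*z) ^ (-(4/3):ℝ) := by positivity
  rcases le_total y x with hyx | hyx
  · rcases le_total z x with hzx | hzx
    · rcases le_total v x with hvx | hvx
      · have h := key_one hy hz hv hyx hzx hvx
        linarith
      · have h := key_one hx hy hz hvx (hyx.trans hvx) (hzx.trans hvx)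
        calc (x*y*z*v)⁻¹ = (v*x*y*z)⁻¹ := by ring
          _ ≤ (x*y*z) ^ (-(4/3):ℝ) := h
          _ ≤ _ := by linarith
    · rcases le_total v z with hvz | hvz
      · have h := key_one hx hy hv hzx (hyx.trans hzx) hvz
        calc (x*y*z*v)⁻¹ = (z*x*y*v)⁻¹ := by ring
          _ ≤ (x*y*v) ^ (-(4/3):ℝ) := h
          _ ≤ _ := by linarith
      · have h := key_one hx hy hz (hzx.trans hvz) ((hyx.trans hzx).trans hvz) hvz
        calc (x*y*z*v)⁻¹ = (v*x*y*z)⁻¹ := by ring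
          _ ≤ (x*y*z) ^ (-(4/3):ℝ) := h
          _ ≤ _ := by linarith
  · rcases le_total z y with hzy | hzy
    · rcases le_total v y with hvy | hvy
      · have h := key_one hx hz hv hyx hzy hvy
        calc (x*y*z*v)⁻¹ = (y*x*z*v)⁻¹ := by ring
          _ ≤ (x*z*v) ^ (-(4/3):ℝ) := h
          _ ≤ _ := by linarith
      · have h := key_one hx hy hz (hyx.trans hvy) hvy (hzy.trans hvy)
        calc (x*y*z*v)⁻¹ = (v*x*y*z)⁻¹ := by ring
          _ ≤ (x*y*z) ^ (-(4/3):ℝ) := h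
          _ ≤ _ := by linarith
    · rcases le_total v z with hvz | hvz
      · have h := key_one hx hy hv (hyx.trans hzy) hzy hvz
        calc (x*y*z*v)⁻¹ = (z*x*y*v)⁻¹ := by ring
          _ ≤ (x*y*v) ^ (-(4/3):ℝ) := h
          _ ≤ _ := by linarith
      · have h := key_one hx hy hz ((hyx.trans hzy).trans hvz) (hzy.trans hvz) hvz
        calc (x*y*z*v)⁻¹ = (v*x*y*z)⁻¹ := by ring
          _ ≤ (x*y*z) ^ (-(4/3):ℝ) := h
          _ ≤ _ := by linarith

lemma one_le_absp {s : ℤ} (hs : s ≠ 0) : (1:ℝ) ≤ |(s:ℝ)| := by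
  have h := Int.one_le_abs hs
  calc (1:ℝ) ≤ ((|s| : ℤ) : ℝ) := by exact_mod_cast h
    _ = |(s:ℝ)| := by push_cast; ring

def Qt (a b c e : ℕ) := {p : ℤ × ℤ × ℤ × ℤ // p.1 ≠ 0 ∧ p.2.1 ≠ 0 ∧ p.2.2.1 ≠ 0 ∧ p.2.2.2 ≠ 0 ∧
    (a : ℤ) * p.1 + b * p.2.1 + c * p.2.2.1 + e * p.2.2.2 = 0}

lemma summable_norm_Q (a b c e : ℕ) (ha : 0 < a) (hb : 0 < b) (hc : 0 < c) (he : 0 < e) :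
    Summable (fun p : Qt a b c e => ‖w p.1.1 * w p.1.2.1 * w p.1.2.2.1 * w p.1.2.2.2‖) := by
  have ha0 : (a:ℤ) ≠ 0 := by exact_mod_cast ha.ne'
  have hb0 : (b:ℤ) ≠ 0 := by exact_mod_cast hb.ne'
  have hc0 : (c:ℤ) ≠ 0 := by exact_mod_cast hc.ne'
  have he0 : (e:ℤ) ≠ 0 := by exact_mod_cast he.ne'
  have h43 : (1:ℝ) < 4/3 := by norm_num
  have hg := Real.summable_abs_int_rpow h43
  have hg2 : Summable (fun q : ℤ×ℤ => |(q.1:ℝ)| ^ (-(4/3):ℝ) * |(q.2:ℝ)| ^ (-(4/3):ℝ)) :=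
    hg.mul_of_nonneg hg (fun n => by positivity) (fun n => by positivity)
  have hg3 : Summable (fun q : ℤ×ℤ×ℤ =>
      |(q.1:ℝ)| ^ (-(4/3):ℝ) * (|(q.2.1:ℝ)| ^ (-(4/3):ℝ) * |(q.2.2:ℝ)| ^ (-(4/3):ℝ))) :=
    hg.mul_of_nonneg hg2 (fun n => by positivity) (fun q => by positivity)
  have hι1 : Function.Injective (fun p : Qt a b c e => (p.1.2.1, p.1.2.2.1, p.1.2.2.2)) := by
    rintro ⟨⟨s,t,u,v⟩,hs,ht,hu,hv,hp⟩ ⟨⟨s2,t2,u2,v2⟩,hs2,ht2,hu2,hv2,hp2⟩ h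
    simp only [Prod.mk.injEq] at h
    obtain ⟨h1, h2, h3⟩ := h
    subst h1; subst h2; subst h3
    have h4 : (a:ℤ) * s = a * s2 := by linarith
    have h5 := mul_left_cancel₀ ha0 h4
    subst h5
    rfl
  have hι2 : Function.Injective (fun p : Qt a b c e => (p.1.1, p.1.2.2.1, p.1.2.2.2)) := by
    rintro ⟨⟨s,t,u,v⟩,hs,ht,hu,hv,hp⟩ ⟨⟨s2,t2,u2,v2⟩,hs2,ht2,hu2,hv2,hp2⟩ h
    simp only [Prod.mk.injEq] at h
    obtain ⟨h1, h2, h3⟩ := h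
    subst h1; subst h2; subst h3
    have h4 : (b:ℤ) * t = b * t2 := by linarith
    have h5 := mul_left_cancel₀ hb0 h4
    subst h5
    rfl
  have hι3 : Function.Injective (fun p : Qt a b c e => (p.1.1, p.1.2.1, p.1.2.2.2)) := by
    rintro ⟨⟨s,t,u,v⟩,hs,ht,hu,hv,hp⟩ ⟨⟨s2,t2,u2,v2⟩,hs2,ht2,hu2,hv2,hp2⟩ h
    simp only [Prod.mk.injEq] at h
    obtain ⟨h1, h2, h3⟩ := h
    subst h1; subst h2; subst h3
    have h4 : (c:ℤ) * u = c * u2 := by linarith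
    have h5 := mul_left_cancel₀ hc0 h4
    subst h5
    rfl
  have hι4 : Function.Injective (fun p : Qt a b c e => (p.1.1, p.1.2.1, p.1.2.2.1)) := by
    rintro ⟨⟨s,t,u,v⟩,hs,ht,hu,hv,hp⟩ ⟨⟨s2,t2,u2,v2⟩,hs2,ht2,hu2,hv2,hp2⟩ h
    simp only [Prod.mk.injEq] at h
    obtain ⟨h1, h2, h3⟩ := h
    subst h1; subst h2; subst h3
    have h4 : (e:ℤ) * v = e * v2 := by linarith
    have h5 := mul_left_cancel₀ he0 h4
    subst h5
    rfl
  have hr1 := hg3.comp_injective hι1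
  have hr2 := hg3.comp_injective hι2
  have hr3 := hg3.comp_injective hι3
  have hr4 := hg3.comp_injective hι4
  have hbig : Summable (fun p : Qt a b c e =>
      (|(p.1.2.1:ℝ)| ^ (-(4/3):ℝ) * (|(p.1.2.2.1:ℝ)| ^ (-(4/3):ℝ) * |(p.1.2.2.2:ℝ)| ^ (-(4/3):ℝ)))
      + (|(p.1.1:ℝ)| ^ (-(4/3):ℝ) * (|(p.1.2.2.1:ℝ)| ^ (-(4/3):ℝ) * |(p.1.2.2.2:ℝ)| ^ (-(4/3):ℝ)))
      + (|(p.1.1:ℝ)| ^ (-(4/3):ℝ) * (|(p.1.2.1:ℝ)| ^ (-(4/3):ℝ) * |(p.1.2.2.2:ℝ)| ^ (-(4/3):ℝ)))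
      + (|(p.1.1:ℝ)| ^ (-(4/3):ℝ) * (|(p.1.2.1:ℝ)| ^ (-(4/3):ℝ) * |(p.1.2.2.1:ℝ)| ^ (-(4/3):ℝ)))) :=
    ((hr1.add hr2).add hr3).add hr4
  apply Summable.of_nonneg_of_le (fun p => norm_nonneg _) ?_ hbig
  rintro ⟨⟨s,t,u,v⟩,hs,ht,hu,hv,hp⟩
  simp only
  have h1s := one_le_absp hs
  have h1t := one_le_absp ht
  have h1u := one_le_absp hu
  have h1v := one_le_absp hv
  have hn : ‖w s * w t * w u * w v‖ ≤ (|(s:ℝ)| * |(t:ℝ)| * |(u:ℝ)| * |(v:ℝ)|)⁻¹ := by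
    rw [norm_mul, norm_mul, norm_mul, mul_inv, mul_inv, mul_inv]
    have h0 : ∀ r : ℤ, (0:ℝ) ≤ |(r:ℝ)|⁻¹ := fun r => by positivity
    refine mul_le_mul (mul_le_mul (mul_le_mul (norm_w_le s) (norm_w_le t)
      (norm_nonneg _) (h0 s)) (norm_w_le u) (norm_nonneg _) ?_) (norm_w_le v)
      (norm_nonneg _) ?_
    · positivity
    · positivity
  refine le_trans hn (le_trans (key4 h1s h1t h1u h1v) (le_of_eq ?_))
  have hm : ∀ x y z : ℝ, 0 ≤ x → 0 ≤ y → 0 ≤ z →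
      (x*y*z) ^ (-(4/3):ℝ) = x ^ (-(4/3):ℝ) * (y ^ (-(4/3):ℝ) * z ^ (-(4/3):ℝ)) := by
    intro x y z hx hy hz
    rw [Real.mul_rpow (by positivity) hz, Real.mul_rpow hx hy, mul_assoc]
  rw [hm _ _ _ (abs_nonneg _) (abs_nonneg _) (abs_nonneg _),
    hm _ _ _ (abs_nonneg _) (abs_nonneg _) (abs_nonneg _),
    hm _ _ _ (abs_nonneg _) (abs_nonneg _) (abs_nonneg _),
    hm _ _ _ (abs_nonneg _) (abs_nonneg _) (abs_nonneg _)]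


/-- product formula for four `w`'s -/
lemma wprod (s t u v : ℤ) :
    w s * w t * w u * w v = (((1 : ℝ) / (16*π^4*((s:ℝ)*t*u*v)) : ℝ) : ℂ) := by
  have hI : (I:ℂ)^4 = 1 := by
    rw [show (4:ℕ) = 2*2 from rfl, pow_mul, Complex.I_sq]
    norm_num
  rw [w_def, w_def, w_def, w_def, div_mul_div_comm, div_mul_div_comm, div_mul_div_comm]
  push_cast
  rw [show ((-1:ℂ) * -1 * -1 * -1) = 1 by ring]
  congr 1
  linear_combination (16 * (π:ℂ)^2 * (s:ℂ) * t * u * v * π^2) * hI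

/-- The measure identification and unfolding of the integral. -/
lemma integral_eq (a b c e : ℕ) :
    (∫ x : 𝕌, (starRingEnd ℂ) (phi a x * phi b x) * (phi c x * phi e x) ∂haarAddCircle)
      = ((∫ x in (0:ℝ)..1, saw (a*x) * saw (b*x) * saw (c*x) * saw (e*x) : ℝ) : ℂ) := by
  have hvol : (volume : Measure 𝕌) = haarAddCircle := by
    rw [AddCircle.volume_eq_smul_haarAddCircle]
    simp
  rw [← hvol, ← AddCircle.intervalIntegral_preimage (1:ℝ) 0
    (fun z => (starRingEnd ℂ) (phi a z * phi b z) * (phi c z * phi e z)), zero_add,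
    ← intervalIntegral.integral_ofReal]
  apply intervalIntegral.integral_congr
  intro x _
  dsimp only
  rw [map_mul, phi_real, phi_real, phi_coe, phi_coe, phi_coe, phi_coe]
  push_cast
  ring

/-- The sigma-type parametrisation of the solution set. -/
def sigmaEquiv (a b c e : ℕ) : (Σ k : ℤ, Pset a b (-k) × Pset c e k) ≃ Qt a b c e where
  toFun x := ⟨(x.2.1.1.1, x.2.1.1.2, x.2.2.1.1, x.2.2.1.2), x.2.1.2.1, x.2.1.2.2.1,
    x.2.2.2.1, x.2.2.2.2.1, by
      have h1 := x.2.1.2.2.2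
      have h2 := x.2.2.2.2.2
      dsimp only
      linarith⟩
  invFun p := ⟨(c:ℤ) * p.1.2.2.1 + e * p.1.2.2.2,
    (⟨(p.1.1, p.1.2.1), p.2.1, p.2.2.1, by
        have h := p.2.2.2.2.2
        dsimp only
        linarith⟩,
     ⟨(p.1.2.2.1, p.1.2.2.2), p.2.2.2.1, p.2.2.2.2.1, rfl⟩)⟩
  left_inv x := by
    rcases x with ⟨k, ⟨⟨⟨s,t⟩, hst⟩, ⟨⟨uu,vv⟩, huv⟩⟩⟩
    obtain ⟨hu, hv, hk⟩ := huv
    subst hk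
    rfl
  right_inv p := rfl

/-- Main HasSum statement. -/
lemma main (a b c e : ℕ) (ha : 0 < a) (hb : 0 < b) (hc : 0 < c) (he : 0 < e) :
    HasSum (fun p : Qt a b c e =>
        1 / ((p.1.1 : ℝ) * p.1.2.1 * p.1.2.2.1 * p.1.2.2.2))
      (16 * π ^ 4 * ∫ x in (0:ℝ)..1, saw (a * x) * saw (b * x) * saw (c * x) * saw (e * x)) := by
  -- the complex-valued family
  set f : Qt a b c e → ℂ := fun p => w p.1.1 * w p.1.2.1 * w p.1.2.2.1 * w p.1.2.2.2 with hf
  have hsum : Summable f := Summable.of_norm (summable_norm_Q a b c e ha hb hc he)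
  obtain ⟨S, hS⟩ := hsum
  -- transport along the sigma equivalence
  have hSig : HasSum (f ∘ (sigmaEquiv a b c e)) S := (sigmaEquiv a b c e).hasSum_iff.mpr hS
  -- fibers
  have hfib : ∀ k : ℤ, HasSum (fun qq : Pset a b (-k) × Pset c e k => (f ∘ (sigmaEquiv a b c e)) ⟨k, qq⟩)
      ((starRingEnd ℂ) (fourierCoeff (fun x => phi a x * phi b x) k) *
        fourierCoeff (fun x => phi c x * phi e x) k) := by
    intro k
    have h1 := hasSum_fiber_conj a b ha hb k
    have h2 := hasSum_fiber c e hc he k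
    have hfs : Summable (fun qq : Pset a b (-k) × Pset c e k =>
        (w qq.1.1.1 * w qq.1.1.2) * (w qq.2.1.1 * w qq.2.1.2)) := by
      have hcomp := hSig.summable.comp_injective (sigma_mk_injective (i := k))
      apply hcomp.congr
      intro qq
      show f ((sigmaEquiv a b c e) ⟨k, qq⟩) = _
      rw [hf]
      show w qq.1.1.1 * w qq.1.1.2 * w qq.2.1.1 * w qq.2.1.2 = _
      ring
    have H := h1.mul h2 hfs
    apply H.congr_fun
    intro qq
    show f ((sigmaEquiv a b c e) ⟨k, qq⟩) = _
    rw [hf]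
    show w qq.1.1.1 * w qq.1.1.2 * w qq.2.1.1 * w qq.2.1.2 = _
    ring
  have hg : HasSum (fun k : ℤ => (starRingEnd ℂ) (fourierCoeff (fun x => phi a x * phi b x) k) *
      fourierCoeff (fun x => phi c x * phi e x) k) S := hSig.sigma hfib
  -- Parseval identifies the sum
  have hPar := parseval (memLp_phi_mul a b) (memLp_phi_mul c e)
  rw [integral_eq a b c e] at hPar
  have hSval : S = ((∫ x in (0:ℝ)..1, saw (a*x) * saw (b*x) * saw (c*x) * saw (e*x) : ℝ) : ℂ) :=
    hg.unique hPar
  rw [hSval] at hS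
  -- convert to the real statement
  have hS2 : HasSum (fun p : Qt a b c e =>
      (((1 : ℝ) / (16*π^4*((p.1.1:ℝ) * p.1.2.1 * p.1.2.2.1 * p.1.2.2.2)) : ℝ) : ℂ))
      ((∫ x in (0:ℝ)..1, saw (a*x) * saw (b*x) * saw (c*x) * saw (e*x) : ℝ) : ℂ) := by
    apply hS.congr_fun
    intro p
    exact (wprod _ _ _ _).symm
  have hS3 := (Complex.hasSum_ofReal).mp hS2
  have hS4 := hS3.mul_left (16 * π ^ 4)
  apply hS4.congr_fun
  intro p
  obtain ⟨⟨s,t,u,v⟩,hs,ht,hu,hv,hp⟩ := p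
  have hsr : ((s:ℝ) * t * u * v) ≠ 0 := by
    have h1 : (s:ℝ) ≠ 0 := Int.cast_ne_zero.mpr hs
    have h2 : (t:ℝ) ≠ 0 := Int.cast_ne_zero.mpr ht
    have h3 : (u:ℝ) ≠ 0 := Int.cast_ne_zero.mpr hu
    have h4 : (v:ℝ) ≠ 0 := Int.cast_ne_zero.mpr hv
    positivity
  have h16 : (16*π^4 : ℝ) ≠ 0 := by positivity
  dsimp only
  rw [mul_one_div, div_eq_div_iff hsr (mul_ne_zero h16 hsr)]
  ring


end Franel

theorem reciprocal_sum_eq_franel_integral (a b c e : ℕ)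
    (ha : 0 < a) (hb : 0 < b) (hc : 0 < c) (he : 0 < e) :
    (∑' p : {p : ℤ × ℤ × ℤ × ℤ // p.1 ≠ 0 ∧ p.2.1 ≠ 0 ∧ p.2.2.1 ≠ 0 ∧ p.2.2.2 ≠ 0 ∧
        (a : ℤ) * p.1 + b * p.2.1 + c * p.2.2.1 + e * p.2.2.2 = 0},
      1 / ((p.1.1 : ℝ) * p.1.2.1 * p.1.2.2.1 * p.1.2.2.2)) =
    16 * π ^ 4 * ∫ x in (0:ℝ)..1, saw (a * x) * saw (b * x) * saw (c * x) * saw (e * x) := by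
  exact (Franel.main a b c e ha hb hc he).tsum_eq
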